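/- Let $u,v,x,y$ be elements of a Coxeter group with $\ell(ux)=\ell(u)+\ell(x)$, $\ell(vy)=\ell(v)+\ell(y)$, and $ux = vy$. Then $u \ge v$ in the Bruhat order if and only if $x \le y$ in the Bruhat order. -/

import Mathlib

namespace PaperStmt

open scoped Classical

variable {B : Type*} {W : Type*} [Group W] {M : CoxeterMatrix B}

/-- Bruhat (strong) cover: `v = t * u` for a reflection `t`, with `ℓ v = ℓ u + 1`. -/
def BruhatCov (cs : CoxeterSystem M W) (u v : W) : Prop :=
  cs.length v = cs.length u + 1 ∧ ∃ t : W, cs.IsReflection t ∧ v = t * u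

/-- The Bruhat (strong) order, generated by the covering relations. -/
def BruhatLe (cs : CoxeterSystem M W) : W → W → Prop :=
  Relation.ReflTransGen (BruhatCov cs)

/-- Strict Bruhat order. -/
def BruhatLt (cs : CoxeterSystem M W) (u v : W) : Prop :=
  BruhatLe cs u v ∧ u ≠ v

/-- Left weak order: `u ≤_L v` iff `ℓ(v u⁻¹) + ℓ u = ℓ v`. -/
def leftLe (cs : CoxeterSystem M W) (u v : W) : Prop :=
  cs.length (v * u⁻¹) + cs.length u = cs.length v

/-- Right weak order: `u ≤_R v` iff `ℓ u + ℓ(u⁻¹ v) = ℓ v`. -/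
def rightLe (cs : CoxeterSystem M W) (u v : W) : Prop :=
  cs.length u + cs.length (u⁻¹ * v) = cs.length v

/-- Demazure action of a simple reflection: `φ_s(x) = s x` if `s x > x`, else `x`. -/
noncomputable def phi (cs : CoxeterSystem M W) (i : B) (x : W) : W :=
  if BruhatLt cs x (cs.simple i * x) then cs.simple i * x else x

/-- Anti-Demazure action: `ψ_s(x) = s x` if `s x < x`, else `x`. -/
noncomputable def psi (cs : CoxeterSystem M W) (i : B) (x : W) : W :=
  if BruhatLt cs (cs.simple i * x) x then cs.simple i * x else x

/-- Right anti-Demazure action: `ψ^R_s(x) = x s` if `x s < x`, else `x`. -/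
noncomputable def psiR (cs : CoxeterSystem M W) (i : B) (x : W) : W :=
  if BruhatLt cs (x * cs.simple i) x then x * cs.simple i else x

/-- `φ_w` along a word `w = s_1 ⋯ s_n`: `φ_{s_1} ∘ ⋯ ∘ φ_{s_n}`. -/
noncomputable def phiWord (cs : CoxeterSystem M W) (ω : List B) (x : W) : W :=
  ω.foldr (phi cs) x

/-- `ψ_w` along a word `w = s_1 ⋯ s_n`: `ψ_{s_1} ∘ ⋯ ∘ ψ_{s_n}`. -/
noncomputable def psiWord (cs : CoxeterSystem M W) (ω : List B) (x : W) : W :=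
  ω.foldr (psi cs) x

/-- `ψ^R_w` along a word `w = s_1 ⋯ s_n`: `ψ^R_{s_n} ∘ ⋯ ∘ ψ^R_{s_1}`. -/
noncomputable def psiRWord (cs : CoxeterSystem M W) (ω : List B) (x : W) : W :=
  ω.foldl (fun y i => psiR cs i y) x


section Aux

open CoxeterSystem Equiv List

variable (cs : CoxeterSystem M W)

local prefix:100 "s" => cs.simple
local prefix:100 "π" => cs.wordProd
local prefix:100 "ℓ" => cs.length

private lemma one_add_one' : (1 : ZMod 2) + 1 = 0 := rfl

private lemma sum_double (g : ℕ → ZMod 2) (m : ℕ) :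
    ∑ r ∈ Finset.range m, (g (2*r) + g (2*r+1)) = ∑ k ∈ Finset.range (2*m), g k := by
  induction m with
  | zero => simp
  | succ m ih =>
    rw [Finset.sum_range_succ, ih]
    have h2 : 2 * (m + 1) = (2 * m + 1) + 1 := by ring
    rw [h2, Finset.sum_range_succ, Finset.sum_range_succ, add_assoc]

/-- The basic involution used in the reflection-parity representation. -/
noncomputable def tog (i : B) : Equiv.Perm (W × ZMod 2) :=
  Function.Involutive.toPerm
    (fun p => (s i * p.1 * s i, p.2 + if p.1 = s i then 1 else 0))
    (by
      intro p
      have h1 : s i * (s i * p.1 * s i) * s i = p.1 := by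
        calc s i * (s i * p.1 * s i) * s i = (s i * s i) * p.1 * (s i * s i) := by group
          _ = p.1 := by rw [cs.simple_mul_simple_self]; group
      have h2 : (s i * p.1 * s i = s i) ↔ (p.1 = s i) := by
        constructor
        · intro h
          have h' := congrArg (fun z => s i * z * s i) h
          rw [h1] at h'
          rw [h']
          calc s i * s i * s i = (s i * s i) * s i := by group
            _ = s i := by rw [cs.simple_mul_simple_self]; group
        · intro h
          rw [h]
          calc s i * s i * s i = s i * (s i * s i) := by group
            _ = s i := by rw [cs.simple_mul_simple_self]; group
      have hsnd : (p.2 + if p.1 = s i then 1 else 0) +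
          (if s i * p.1 * s i = s i then (1 : ZMod 2) else 0) = p.2 := by
        by_cases h : p.1 = s i
        · rw [if_pos h, if_pos (h2.mpr h), add_assoc, one_add_one', add_zero]
        · simp [h, (not_iff_not.mpr h2).mpr h]
      exact Prod.ext h1 hsnd)

@[simp] theorem tog_apply (i : B) (p : W × ZMod 2) :
    tog cs i p = (s i * p.1 * s i, p.2 + if p.1 = s i then 1 else 0) := rfl

theorem tog_liftable : CoxeterMatrix.IsLiftable M (tog cs) := by
  intro i j
  set m := M i j with hm
  set a := s i with ha
  set b := s j with hb
  set c := a * b with hc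
  have hcm : c ^ m = 1 := cs.simple_mul_simple_pow i j
  have hb2 : b * b = 1 := cs.simple_mul_simple_self j
  have ha2 : a * a = 1 := cs.simple_mul_simple_self i
  have hbinv : b⁻¹ = b := by rw [inv_eq_iff_mul_eq_one]; exact hb2
  have hainv : a⁻¹ = a := by rw [inv_eq_iff_mul_eq_one]; exact ha2
  have hbc1 : b * c = c⁻¹ * b := by
    rw [hc, mul_inv_rev, hbinv, hainv]
    calc b * (a * b) = b * a * b := by rw [mul_assoc]
      _ = b * a * b := rfl
  have hck : ∀ k : ℕ, b * c ^ k = (c ^ k)⁻¹ * b := by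
    intro k
    induction k with
    | zero => simp
    | succ k ih =>
      calc b * c ^ (k+1) = (b * c ^ k) * c := by rw [pow_succ, mul_assoc]
        _ = (c ^ k)⁻¹ * (b * c) := by rw [ih, mul_assoc]
        _ = (c ^ k)⁻¹ * (c⁻¹ * b) := by rw [hbc1]
        _ = (c ^ (k+1))⁻¹ * b := by rw [pow_succ' c k, mul_inv_rev c (c ^ k), mul_assoc]
  have hconj : ∀ (k e : ℕ) (x : W),
      (c ^ k * x * (c ^ k)⁻¹ = b * c ^ e) ↔ (x = b * c ^ (2*k + e)) := by
    intro k e x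
    have expand : (c ^ k)⁻¹ * (b * c ^ e) * c ^ k = b * c ^ (2*k+e) := by
      calc (c ^ k)⁻¹ * (b * c ^ e) * c ^ k = ((c ^ k)⁻¹ * b) * (c ^ e * c ^ k) := by group
        _ = (b * c ^ k) * (c ^ e * c ^ k) := by rw [← hck]
        _ = b * (c ^ k * (c ^ e * c ^ k)) := by rw [mul_assoc]
        _ = b * c ^ (k + (e + k)) := by rw [← pow_add, ← pow_add]
        _ = b * c ^ (2*k + e) := by congr 2; omega
    constructor
    · intro h
      have hx : x = (c ^ k)⁻¹ * (b * c ^ e) * c ^ k := by rw [← h]; group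
      rw [hx, expand]
    · intro h
      rw [h, ← expand]
      group
  have key : ∀ (k : ℕ) (p : W × ZMod 2), ((tog cs i * tog cs j) ^ k) p =
      (c ^ k * p.1 * (c ^ k)⁻¹,
        p.2 + ∑ r ∈ Finset.range k,
          ((if p.1 = b * c ^ (2 * r) then (1 : ZMod 2) else 0)
            + (if p.1 = b * c ^ (2 * r + 1) then (1 : ZMod 2) else 0))) := by
    intro k
    induction k with
    | zero => intro p; simp
    | succ k ih =>
      intro p
      have step : ((tog cs i * tog cs j) ^ (k+1)) p
          = (tog cs i * tog cs j) (((tog cs i * tog cs j) ^ k) p) := by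
        rw [pow_succ']; rfl
      rw [step, ih]
      set S := ∑ r ∈ Finset.range k,
          ((if p.1 = b * c ^ (2 * r) then (1 : ZMod 2) else 0)
            + (if p.1 = b * c ^ (2 * r + 1) then (1 : ZMod 2) else 0)) with hS
      set q := c ^ k * p.1 * (c ^ k)⁻¹ with hq
      have happ : (tog cs i * tog cs j) ((q, p.2 + S) : W × ZMod 2)
          = (a * (b * q * b) * a,
             (p.2 + S) + ((if q = b then 1 else 0) + (if b * q * b = a then 1 else 0))) := by
        show (tog cs i) ((tog cs j) _) = _
        rw [tog_apply, tog_apply]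
        simp only [← hb, ← ha]
        exact Prod.ext rfl (by ring)
      rw [happ]
      have hfst : a * (b * q * b) * a = c ^ (k+1) * p.1 * (c ^ (k+1))⁻¹ := by
        rw [hq, pow_succ', hc, mul_inv_rev (a*b), mul_inv_rev a b, hbinv, hainv]
        group
      have hq1 : (q = b) ↔ (p.1 = b * c ^ (2*k)) := by
        have h' := hconj k 0 p.1
        simpa using h'
      have hq2 : (b * q * b = a) ↔ (p.1 = b * c ^ (2*k+1)) := by
        have hbq : (b * q * b = a) ↔ (q = b * c) := by
          constructor
          · intro h
            have hqq : q = b⁻¹ * a * b⁻¹ := by rw [← h]; group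
            rw [hqq, hbinv, hc, mul_assoc]
          · intro h
            rw [h, hc]
            calc b * (b * (a * b)) * b = (b * b) * a * (b * b) := by group
              _ = a := by rw [hb2]; group
        rw [hbq]
        have h' := hconj k 1 p.1
        simpa using h'
      apply Prod.ext
      · exact hfst
      · show (p.2 + S) + _ = p.2 + _
        rw [Finset.sum_range_succ, ← hS]
        have e1 : (if q = b then (1:ZMod 2) else 0) = (if p.1 = b * c ^ (2*k) then 1 else 0) := by
          simp only [hq1]
        have e2 : (if b * q * b = a then (1:ZMod 2) else 0)
            = (if p.1 = b * c ^ (2*k+1) then 1 else 0) := by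
          simp only [hq2]
        rw [e1, e2]
        ring
  apply Equiv.ext
  intro p
  have hsum0 : ∑ r ∈ Finset.range m,
      ((if p.1 = b * c ^ (2 * r) then (1 : ZMod 2) else 0)
        + (if p.1 = b * c ^ (2 * r + 1) then (1 : ZMod 2) else 0)) = 0 := by
    rw [sum_double (fun k => if p.1 = b * c ^ k then (1:ZMod 2) else 0) m]
    rw [two_mul, Finset.sum_range_add]
    have hshift : ∀ k, (if p.1 = b * c ^ (m + k) then (1:ZMod 2) else 0)
        = (if p.1 = b * c ^ k then (1:ZMod 2) else 0) := by
      intro k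
      congr 2
      rw [pow_add, hcm, one_mul]
    simp only [hshift]
    exact CharTwo.add_self_eq_zero _
  rw [key m p]
  simp only [hcm, hsum0, add_zero, one_mul, inv_one, mul_one]
  rfl

/-- The reflection-parity representation. -/
noncomputable def refl2 : W →* Equiv.Perm (W × ZMod 2) := cs.lift ⟨tog cs, tog_liftable cs⟩

theorem refl2_simple (i : B) : refl2 cs (s i) = tog cs i := cs.lift_apply_simple _ i

/-- The parity cocycle. -/
noncomputable def NN (w x : W) : ZMod 2 := ((refl2 cs w) (x, 0)).2

theorem refl2_apply (w x : W) (e : ZMod 2) :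
    refl2 cs w (x, e) = (w * x * w⁻¹, e + NN cs w x) := by
  have main : ∀ e : ZMod 2, refl2 cs w (x, e) = (w * x * w⁻¹, e + NN cs w x) := by
    induction w using cs.simple_induction_left with
    | one => intro e; simp [NN]
    | mul_simple_left w i ih =>
      intro e
      have h1 : ∀ e : ZMod 2, refl2 cs (s i * w) (x, e) = tog cs i (refl2 cs w (x, e)) := by
        intro e'
        rw [map_mul, refl2_simple]
        rfl
      have hN : NN cs (s i * w) x = NN cs w x + (if w * x * w⁻¹ = s i then 1 else 0) := by
        unfold NN
        rw [h1 0, ih 0, tog_apply]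
      rw [h1 e, ih e, tog_apply, hN]
      apply Prod.ext
      · simp only [mul_inv_rev, cs.inv_simple]
        group
      · simp only
        ring
  exact main e

theorem NN_one (x : W) : NN cs 1 x = 0 := by simp [NN]

theorem NN_mul (u v x : W) : NN cs (u * v) x = NN cs v x + NN cs u (v * x * v⁻¹) := by
  unfold NN
  rw [map_mul]
  have h1 : (refl2 cs u * refl2 cs v) (x, 0) = refl2 cs u (refl2 cs v (x, 0)) := rfl
  rw [h1, refl2_apply cs v x 0, refl2_apply cs u _ _, refl2_apply cs u _ 0]
  simp

theorem NN_simple (i : B) (x : W) : NN cs (s i) x = if x = s i then 1 else 0 := by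
  unfold NN
  rw [refl2_simple, tog_apply]
  simp

theorem NN_wordProd (ω : List B) (x : W) :
    NN cs (π ω) x = ((cs.rightInvSeq ω).count x : ZMod 2) := by
  induction ω with
  | nil => simp [NN_one]
  | cons i ω ih =>
    rw [cs.wordProd_cons, NN_mul, ih, NN_simple]
    show _ = ((List.count x (((π ω)⁻¹ * (s i) * (π ω)) :: cs.rightInvSeq ω) : ℕ) : ZMod 2)
    rw [List.count_cons]
    have hiff : (π ω * x * (π ω)⁻¹ = s i) ↔ ((π ω)⁻¹ * (s i) * (π ω) = x) := by
      constructor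
      · intro h; rw [← h]; group
      · intro h; rw [← h]; group
    push_cast
    by_cases h : π ω * x * (π ω)⁻¹ = s i
    · rw [if_pos h, if_pos (by simpa using hiff.mp h)]
    · rw [if_neg h, if_neg (by simpa using fun hh => h (hiff.mpr hh))]

private lemma zmod2_add_eq_zero {a b : ZMod 2} (h : a + b = 0) : a = b := by
  revert h; revert a b; decide

theorem NN_refl_self {t : W} (ht : cs.IsReflection t) : NN cs t t = 1 := by
  obtain ⟨z, i, rfl⟩ := ht
  set t := z * s i * z⁻¹ with hts
  have hz : NN cs z⁻¹ t = NN cs z (s i) := by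
    have h0 : NN cs (z * z⁻¹) t = 0 := by
      rw [mul_inv_cancel, NN_one]
    rw [NN_mul] at h0
    have hc : z⁻¹ * t * z⁻¹⁻¹ = s i := by rw [hts]; group
    rw [hc] at h0
    exact zmod2_add_eq_zero h0
  have hsplit : t = z * (s i * z⁻¹) := by rw [hts, mul_assoc]
  have h1 : NN cs t t = NN cs (s i * z⁻¹) t + NN cs z ((s i * z⁻¹) * t * (s i * z⁻¹)⁻¹) := by
    nth_rw 1 [hsplit]
    rw [NN_mul]
  have hc1 : (s i * z⁻¹) * t * (s i * z⁻¹)⁻¹ = s i := by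
    rw [hts, mul_inv_rev, cs.inv_simple, inv_inv]
    calc s i * z⁻¹ * (z * s i * z⁻¹) * (z * s i) = s i * (z⁻¹ * z) * s i * (z⁻¹ * z) * s i := by
          group
      _ = s i * s i * s i := by rw [inv_mul_cancel]; group
      _ = s i * (s i * s i) := by rw [mul_assoc]
      _ = s i := by rw [cs.simple_mul_simple_self, mul_one]
  have h2 : NN cs (s i * z⁻¹) t = NN cs z⁻¹ t + NN cs (s i) (z⁻¹ * t * z⁻¹⁻¹) := NN_mul cs _ _ _
  have hc2 : z⁻¹ * t * z⁻¹⁻¹ = s i := by rw [hts]; group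
  rw [h1, hc1, h2, hc2, NN_simple, if_pos rfl, hz]
  rw [add_comm (NN cs z (s i)) 1, add_assoc]
  rw [CharTwo.add_self_eq_zero, add_zero]

theorem mem_rightInvSeq_of_isRightInversion {ω : List B} (hω : cs.IsReduced ω) {t : W}
    (ht : cs.IsRightInversion (π ω) t) : t ∈ cs.rightInvSeq ω := by
  by_contra hmem
  have hcount : (cs.rightInvSeq ω).count t = 0 := List.count_eq_zero.mpr hmem
  have hN : NN cs (π ω) t = 0 := by rw [NN_wordProd, hcount]; simp
  have hN2 : NN cs (π ω * t) t = 1 := by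
    rw [NN_mul]
    have h1 : t * t * t⁻¹ = t := by
      rw [ht.1.mul_self, one_mul, ht.1.inv]
    rw [h1, NN_refl_self cs ht.1, hN, add_zero]
  obtain ⟨τ, hτred, hτ⟩ := cs.exists_reduced_word' (π ω * t)
  rw [hτ, NN_wordProd] at hN2
  have hmem2 : t ∈ cs.rightInvSeq τ := by
    by_contra hmem2
    rw [List.count_eq_zero.mpr hmem2] at hN2
    simp at hN2
  have hinv2 := cs.isRightInversion_of_mem_rightInvSeq hτred hmem2
  rw [← hτ] at hinv2
  have : π ω * t * t = π ω := by rw [mul_assoc, ht.1.mul_self, mul_one]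
  have h3 := hinv2.2
  rw [this] at h3
  have h4 := ht.2
  omega

theorem mem_leftInvSeq_of_isLeftInversion {ω : List B} (hω : cs.IsReduced ω) {t : W}
    (ht : cs.IsLeftInversion (π ω) t) : t ∈ cs.leftInvSeq ω := by
  have h1 : cs.IsRightInversion (π ω.reverse) t := by
    rw [cs.wordProd_reverse]
    exact cs.isRightInversion_inv_iff.mpr ht
  have h2 := mem_rightInvSeq_of_isRightInversion cs ((cs.isReduced_reverse_iff ω).mpr hω) h1
  rw [cs.rightInvSeq_reverse, List.mem_reverse] at h2
  exact h2

/-- Left strong exchange property. -/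
theorem strong_exchange_left {ω : List B} (hω : cs.IsReduced ω) {t : W}
    (ht : cs.IsLeftInversion (π ω) t) :
    ∃ j < ω.length, π (ω.eraseIdx j) = t * π ω := by
  have hmem := mem_leftInvSeq_of_isLeftInversion cs hω ht
  obtain ⟨j, hj, hget⟩ := List.mem_iff_getElem.mp hmem
  rw [cs.length_leftInvSeq] at hj
  refine ⟨j, hj, ?_⟩
  rw [← cs.getD_leftInvSeq_mul_wordProd ω j]
  congr 1
  rw [← hget, List.getD_eq_getElem _ 1 (by rw [cs.length_leftInvSeq]; exact hj)]


theorem bruhatLe_refl (u : W) : BruhatLe cs u u := Relation.ReflTransGen.refl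

theorem bruhatLe_trans {u v w : W} (h1 : BruhatLe cs u v) (h2 : BruhatLe cs v w) :
    BruhatLe cs u w := Relation.ReflTransGen.trans h1 h2

theorem bruhatLe_length {u v : W} (h : BruhatLe cs u v) : ℓ u ≤ ℓ v := by
  induction h with
  | refl => exact le_refl _
  | tail hle hcov ih =>
    have := hcov.1
    omega

theorem bruhatLe_one {v : W} (h : BruhatLe cs v 1) : v = 1 := by
  have h1 := bruhatLe_length cs h
  rw [cs.length_one] at h1
  exact cs.length_eq_zero_iff.mp (Nat.le_zero.mp h1)

theorem bruhatLe_inv {u v : W} (h : BruhatLe cs u v) : BruhatLe cs u⁻¹ v⁻¹ := by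
  induction h with
  | refl => exact Relation.ReflTransGen.refl
  | @tail b c hle hcov ih =>
    refine Relation.ReflTransGen.tail ih ?_
    obtain ⟨hlen, t, ht, rfl⟩ := hcov
    refine ⟨?_, b⁻¹ * t * b, ?_, ?_⟩
    · rw [cs.length_inv, cs.length_inv, hlen]
    · have := ht.conj b⁻¹
      rwa [inv_inv] at this
    · rw [mul_inv_rev, ht.inv]
      group

/-- The diamond lemma: if `v ⋖ w`, `s i` is a left descent of `w` but not of `v`,
then `w = s i * v`. -/
theorem bruhat_diamond {v w : W} {i : B} (hcov : BruhatCov cs v w)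
    (hw : ℓ (s i * w) < ℓ w) (hv : ℓ v < ℓ (s i * v)) : w = s i * v := by
  obtain ⟨hlen, t, ht, rfl⟩ := hcov
  obtain ⟨χ, hχred, hχ⟩ := cs.exists_reduced_word' (s i * (t * v))
  have hχlen : χ.length = ℓ (s i * (t * v)) := by rw [hχ, hχred]
  have hdown : ℓ (s i * (t * v)) + 1 = ℓ (t * v) := by
    have := cs.length_simple_mul (t * v) i
    omega
  have hπω : π (i :: χ) = t * v := by
    rw [cs.wordProd_cons, ← hχ, cs.simple_mul_simple_cancel_left]
  have hωred : cs.IsReduced (i :: χ) := by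
    unfold CoxeterSystem.IsReduced
    rw [hπω]
    simp only [List.length_cons, hχlen]
    omega
  have hlinv : cs.IsLeftInversion (π (i :: χ)) t := by
    constructor
    · exact ht
    · rw [hπω, ← mul_assoc, ht.mul_self, one_mul]
      omega
  obtain ⟨j, hj, herase⟩ := strong_exchange_left cs hωred hlinv
  rw [hπω, ← mul_assoc, ht.mul_self, one_mul] at herase
  match j, hj with
  | 0, _ =>
    have hv' : π χ = v := herase
    have hv2 : s i * (t * v) = v := by rw [hχ]; exact hv'
    calc t * v = s i * (s i * (t * v)) := by rw [cs.simple_mul_simple_cancel_left]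
      _ = s i * v := by rw [hv2]
  | (k+1), hj =>
    exfalso
    have hk : k < χ.length := by
      simp only [List.length_cons] at hj
      omega
    have herase2 : ((i :: χ).eraseIdx (k+1)) = i :: χ.eraseIdx k := rfl
    rw [herase2, cs.wordProd_cons] at herase
    have hsv : s i * v = π (χ.eraseIdx k) := by
      rw [← herase, cs.simple_mul_simple_cancel_left]
    have hlen2 : ℓ (s i * v) ≤ χ.length - 1 := by
      rw [hsv]
      calc ℓ (π (χ.eraseIdx k)) ≤ (χ.eraseIdx k).length := cs.length_wordProd_le _
        _ = χ.length - 1 := by rw [List.length_eraseIdx]; simp [hk]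
    omega

theorem simple_mul_down {w : W} {i : B} (h : ℓ (s i * w) < ℓ w) : ℓ (s i * w) + 1 = ℓ w := by
  have := cs.length_simple_mul w i
  omega

theorem simple_mul_up {w : W} {i : B} (h : ¬ ℓ (s i * w) < ℓ w) : ℓ (s i * w) = ℓ w + 1 := by
  have := cs.length_simple_mul w i
  omega

/-- Lifting property, part 1. -/
theorem bruhat_liftA : ∀ n : ℕ, ∀ u v : W, ∀ i : B, ℓ u ≤ n → BruhatLe cs v u →
    ℓ (s i * u) < ℓ u → ℓ (s i * v) < ℓ v → BruhatLe cs (s i * v) (s i * u) := by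
  intro n
  induction n with
  | zero =>
    intro u v i hn hle hu hv
    omega
  | succ n ih =>
    intro u v i hn hle hu hv
    rcases (Relation.ReflTransGen.cases_tail hle) with rfl | ⟨w, hvw, hcov⟩
    · exact bruhatLe_refl cs _
    · by_cases hw : ℓ (s i * w) < ℓ w
      · have hwn : ℓ w ≤ n := by
          have := hcov.1
          omega
        have ih2 := ih w v i hwn hvw hw hv
        refine Relation.ReflTransGen.tail ih2 ?_
        -- cover : (s i * w) ⋖ (s i * u)
        obtain ⟨hlen, t, ht, rfl⟩ := hcov
        have h1 : ℓ (s i * (t * w)) + 1 = ℓ (t * w) := simple_mul_down cs hu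
        have h2 : ℓ (s i * w) + 1 = ℓ w := simple_mul_down cs hw
        refine ⟨by omega, s i * t * s i, ?_, ?_⟩
        · have := ht.conj (s i)
          rwa [cs.inv_simple] at this
        · rw [mul_assoc, mul_assoc, cs.simple_mul_simple_cancel_left, ← mul_assoc]
      · have hdiamond := bruhat_diamond cs hcov hu (by
          have := cs.length_simple_mul_ne w i
          omega)
        have hsu : s i * u = w := by
          rw [hdiamond, ← mul_assoc, cs.simple_mul_simple_self, one_mul]
        rw [hsu]
        refine Relation.ReflTransGen.trans (Relation.ReflTransGen.single ?_) hvw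
        exact ⟨by have := simple_mul_down cs hv; omega, s i, cs.isReflection_simple i, by
          rw [← mul_assoc, cs.simple_mul_simple_self, one_mul]⟩

/-- Lifting property, part 2. -/
theorem bruhat_liftB : ∀ n : ℕ, ∀ u v : W, ∀ i : B, ℓ u ≤ n → BruhatLe cs v u →
    ℓ (s i * u) < ℓ u → ℓ v < ℓ (s i * v) → BruhatLe cs v (s i * u) := by
  intro n
  induction n with
  | zero =>
    intro u v i hn hle hu hv
    omega
  | succ n ih =>
    intro u v i hn hle hu hv
    rcases (Relation.ReflTransGen.cases_tail hle) with rfl | ⟨w, hvw, hcov⟩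
    · omega
    · by_cases hw : ℓ (s i * w) < ℓ w
      · have hwn : ℓ w ≤ n := by
          have := hcov.1
          omega
        have ih2 := ih w v i hwn hvw hw hv
        refine Relation.ReflTransGen.tail ih2 ?_
        obtain ⟨hlen, t, ht, rfl⟩ := hcov
        have h1 : ℓ (s i * (t * w)) + 1 = ℓ (t * w) := simple_mul_down cs hu
        have h2 : ℓ (s i * w) + 1 = ℓ w := simple_mul_down cs hw
        refine ⟨by omega, s i * t * s i, ?_, ?_⟩
        · have := ht.conj (s i)
          rwa [cs.inv_simple] at this
        · rw [mul_assoc, mul_assoc, cs.simple_mul_simple_cancel_left, ← mul_assoc]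
      · have hdiamond := bruhat_diamond cs hcov hu (by
          have := cs.length_simple_mul_ne w i
          omega)
        have hsu : s i * u = w := by
          rw [hdiamond, ← mul_assoc, cs.simple_mul_simple_self, one_mul]
        rw [hsu]
        exact hvw

/-- The word-splitting lemma: if `s i` is a left descent of `v * y` but not of `v`,
and lengths are additive, then `s i * (v * y) = v * y₁` for a Bruhat co-cover `y₁` of `y`. -/
theorem bruhat_split {v y : W} {i : B} (hadd : ℓ (v * y) = ℓ v + ℓ y)
    (hdes : ℓ (s i * (v * y)) < ℓ (v * y)) (hv : ℓ v < ℓ (s i * v)) :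
    ∃ y₁ : W, s i * (v * y) = v * y₁ ∧ ℓ y = ℓ y₁ + 1 ∧ ℓ (v * y₁) = ℓ v + ℓ y₁ ∧
      BruhatCov cs y₁ y := by
  obtain ⟨α, hαred, hα⟩ := cs.exists_reduced_word' v
  obtain ⟨β, hβred, hβ⟩ := cs.exists_reduced_word' y
  have hαlen : α.length = ℓ v := by rw [hα, hαred]
  have hβlen : β.length = ℓ y := by rw [hβ, hβred]
  have hπω : π (α ++ β) = v * y := by rw [cs.wordProd_append, ← hα, ← hβ]
  have hωred : cs.IsReduced (α ++ β) := by
    unfold CoxeterSystem.IsReduced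
    rw [hπω, List.length_append, hαlen, hβlen, hadd]
  have hlinv : cs.IsLeftInversion (π (α ++ β)) (s i) := by
    refine ⟨cs.isReflection_simple i, ?_⟩
    rw [hπω]
    exact hdes
  obtain ⟨j, hj, herase⟩ := strong_exchange_left cs hωred hlinv
  rw [hπω] at herase
  rw [List.length_append] at hj
  by_cases hjα : j < α.length
  · exfalso
    rw [List.eraseIdx_append_of_lt_length hjα, cs.wordProd_append, ← hβ] at herase
    have herase' : π (α.eraseIdx j) * y = (s i * v) * y := by rw [herase, mul_assoc]
    have hsv : s i * v = π (α.eraseIdx j) := (mul_right_cancel herase').symm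
    have : ℓ (s i * v) ≤ α.length - 1 := by
      rw [hsv]
      calc ℓ (π (α.eraseIdx j)) ≤ (α.eraseIdx j).length := cs.length_wordProd_le _
        _ = α.length - 1 := by rw [List.length_eraseIdx]; simp [hjα]
    omega
  · push_neg at hjα
    rw [List.eraseIdx_append_of_length_le hjα, cs.wordProd_append, ← hα] at herase
    set y₁ := π (β.eraseIdx (j - α.length)) with hy₁
    have heq : s i * (v * y) = v * y₁ := herase.symm
    have hjβ : j - α.length < β.length := by omega
    have hy₁le : ℓ y₁ ≤ β.length - 1 := by
      rw [hy₁]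
      calc ℓ (π (β.eraseIdx (j - α.length))) ≤ (β.eraseIdx (j - α.length)).length :=
            cs.length_wordProd_le _
        _ = β.length - 1 := by rw [List.length_eraseIdx]; simp [hjβ]
    have hdown : ℓ (s i * (v * y)) + 1 = ℓ (v * y) := by
      have := cs.length_simple_mul (v * y) i
      omega
    have hvy₁ : ℓ (v * y₁) = ℓ v + ℓ y - 1 := by
      rw [← heq]
      omega
    have hy₁ge : ℓ v + ℓ y - 1 ≤ ℓ v + ℓ y₁ := by
      have := cs.length_mul_le v y₁
      omega
    have hβpos : 1 ≤ β.length := by omega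
    have hy₁len : ℓ y = ℓ y₁ + 1 := by omega
    refine ⟨y₁, heq, hy₁len, by omega, ?_⟩
    refine ⟨hy₁len, v⁻¹ * s i * v, ?_, ?_⟩
    · have := (cs.isReflection_simple i).conj v⁻¹
      rwa [inv_inv] at this
    · have h5 : y₁ = v⁻¹ * (v * y₁) := by group
      rw [← heq] at h5
      rw [h5]
      have : v⁻¹ * s i * v * (v⁻¹ * (s i * (v * y)))
          = v⁻¹ * (s i * (s i * (v * y))) := by group
      rw [this, cs.simple_mul_simple_cancel_left]
      group

/-- The key lemma: one direction of the main theorem, by induction on `ℓ u`. -/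
theorem bruhat_key : ∀ n : ℕ, ∀ u v x y : W, ℓ u ≤ n →
    ℓ (u * x) = ℓ u + ℓ x → ℓ (v * y) = ℓ v + ℓ y → u * x = v * y →
    BruhatLe cs v u → BruhatLe cs x y := by
  intro n
  induction n with
  | zero =>
    intro u v x y hn hux hvy heq hle
    have hu1 : u = 1 := cs.length_eq_zero_iff.mp (by omega)
    have hv1 : v = 1 := by
      rw [hu1] at hle
      exact bruhatLe_one cs hle
    rw [hu1, hv1, one_mul, one_mul] at heq
    rw [heq]
    exact bruhatLe_refl cs _
  | succ n ih =>
    intro u v x y hn hux hvy heq hle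
    by_cases hu1 : u = 1
    · have hv1 : v = 1 := by
        rw [hu1] at hle
        exact bruhatLe_one cs hle
      rw [hu1, hv1, one_mul, one_mul] at heq
      rw [heq]
      exact bruhatLe_refl cs _
    · obtain ⟨i, hi⟩ := cs.exists_leftDescent_of_ne_one hu1
      unfold CoxeterSystem.IsLeftDescent at hi
      have hsu : ℓ (s i * u) + 1 = ℓ u := simple_mul_down cs hi
      have hlen_eq : ℓ (u * x) = ℓ (v * y) := by rw [heq]
      -- s i is a left descent of u * x = v * y
      have hsux : ℓ (s i * (u * x)) + 1 = ℓ (u * x) := by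
        have hle1 : ℓ (s i * (u * x)) ≤ ℓ (s i * u) + ℓ x := by
          have := cs.length_mul_le (s i * u) x
          rw [mul_assoc] at this
          exact this
        have := cs.length_simple_mul (u * x) i
        omega
      have hsuadd : ℓ ((s i * u) * x) = ℓ (s i * u) + ℓ x := by
        have hle1 : ℓ ((s i * u) * x) ≤ ℓ (s i * u) + ℓ x := cs.length_mul_le _ _
        rw [mul_assoc]
        omega
      by_cases hv : ℓ (s i * v) < ℓ v
      · -- lift both
        have hsv : ℓ (s i * v) + 1 = ℓ v := simple_mul_down cs hv
        have hlift := bruhat_liftA cs (ℓ u) u v i (le_refl _) hle hi hv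
        have heq2 : (s i * u) * x = (s i * v) * y := by
          rw [mul_assoc, mul_assoc, heq]
        have hsvadd : ℓ ((s i * v) * y) = ℓ (s i * v) + ℓ y := by
          have h3 : (s i * v) * y = s i * (u * x) := by rw [mul_assoc, heq]
          rw [h3]
          omega
        exact ih (s i * u) (s i * v) x y (by omega) hsuadd hsvadd heq2 hlift
      · have hv' : ℓ v < ℓ (s i * v) := by
          have := cs.length_simple_mul_ne v i
          omega
        have hlift := bruhat_liftB cs (ℓ u) u v i (le_refl _) hle hi hv'
        have hdes : ℓ (s i * (v * y)) < ℓ (v * y) := by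
          rw [← heq]
          omega
        obtain ⟨y₁, hsplit, hy₁len, hvy₁add, hcov⟩ := bruhat_split cs hvy hdes hv'
        have heq2 : (s i * u) * x = v * y₁ := by
          rw [mul_assoc, heq, hsplit]
        have hxy₁ := ih (s i * u) v x y₁ (by omega) hsuadd hvy₁add heq2 hlift
        exact Relation.ReflTransGen.tail hxy₁ hcov


end Aux

theorem stmt9 (cs : CoxeterSystem M W) (u v x y : W)
    (hu : cs.length (u * x) = cs.length u + cs.length x)
    (hv : cs.length (v * y) = cs.length v + cs.length y)
    (h : u * x = v * y) :
    BruhatLe cs v u ↔ BruhatLe cs x y := by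
  constructor
  · intro hle
    exact bruhat_key cs (cs.length u) u v x y (le_refl _) hu hv h hle
  · intro hle
    have h1 : cs.length (y⁻¹ * v⁻¹) = cs.length y⁻¹ + cs.length v⁻¹ := by
      rw [← mul_inv_rev, cs.length_inv, cs.length_inv, cs.length_inv, hv]
      omega
    have h2 : cs.length (x⁻¹ * u⁻¹) = cs.length x⁻¹ + cs.length u⁻¹ := by
      rw [← mul_inv_rev, cs.length_inv, cs.length_inv, cs.length_inv, hu]
      omega
    have h3 : y⁻¹ * v⁻¹ = x⁻¹ * u⁻¹ := by
      rw [← mul_inv_rev, ← mul_inv_rev, h]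
    have h4 : BruhatLe cs x⁻¹ y⁻¹ := bruhatLe_inv cs hle
    have h5 := bruhat_key cs (cs.length y⁻¹) y⁻¹ x⁻¹ v⁻¹ u⁻¹ (le_refl _) h1 h2 h3 h4
    have h6 := bruhatLe_inv cs h5
    rwa [inv_inv, inv_inv] at h6
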